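/- For unit vectors ψ̃₀ = (cos(π/K), sin(π/K)) and ψ̃₁ = (cos(π/K), -sin(π/K)) and λ = 1 + |cos(2π/K)|, the operator 1 - (1/λ)(|ψ̃₀^⊥⟩⟨ψ̃₀^⊥| + |ψ̃₁^⊥⟩⟨ψ̃₁^⊥|) is positive semidefinite, so that {(1/λ)|ψ̃₀^⊥⟩⟨ψ̃₀^⊥|, (1/λ)|ψ̃₁^⊥⟩⟨ψ̃₁^⊥|, 1 - (1/λ)(|ψ̃₀^⊥⟩⟨ψ̃₀^⊥| + |ψ̃₁^⊥⟩⟨ψ̃₁^⊥|)} is a valid POVM on ℂ². -/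

import Mathlib

open Real Matrix

lemma rankone_psd (v : Fin 2 → ℝ) (c : ℝ) (hc : 0 ≤ c) :
    (c • vecMulVec v v).PosSemidef := by
  rw [posSemidef_iff_dotProduct_mulVec]
  constructor
  · ext i j
    simp [Matrix.IsHermitian, vecMulVec_apply, mul_comm]
  · intro y
    have : star y ⬝ᵥ (c • vecMulVec v v) *ᵥ y
        = c * (v 0 * y 0 + v 1 * y 1) ^ 2 := by
      simp [Matrix.mulVec, dotProduct, Fin.sum_univ_two, vecMulVec_apply]
      ring
    rw [this]
    positivity

/-- With `λ = 1 + |cos(2π/K)|`, the three operators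
`(1/λ)|ψ̃₀^⊥⟩⟨ψ̃₀^⊥|`, `(1/λ)|ψ̃₁^⊥⟩⟨ψ̃₁^⊥|` and
`1 - (1/λ)(|ψ̃₀^⊥⟩⟨ψ̃₀^⊥| + |ψ̃₁^⊥⟩⟨ψ̃₁^⊥|)` are all positive semidefinite and
sum to the identity, i.e. they form a valid POVM on ℂ² (here represented on ℝ²,
since all vectors are real). -/
theorem povm_enhancement_valid (K : ℕ) (hK : 3 ≤ K)
    (ψ0p ψ1p : Fin 2 → ℝ)
    (hψ0p : ψ0p = ![-Real.sin (π / K), Real.cos (π / K)])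
    (hψ1p : ψ1p = ![Real.sin (π / K), Real.cos (π / K)])
    (lam : ℝ) (hlam : lam = 1 + |Real.cos (2 * π / K)|)
    (P0 P1 Pfill : Matrix (Fin 2) (Fin 2) ℝ)
    (hP0 : P0 = (1 / lam) • vecMulVec ψ0p ψ0p)
    (hP1 : P1 = (1 / lam) • vecMulVec ψ1p ψ1p)
    (hPf : Pfill = 1 - (1 / lam) • (vecMulVec ψ0p ψ0p + vecMulVec ψ1p ψ1p)) :
    Pfill.PosSemidef ∧ P0.PosSemidef ∧ P1.PosSemidef ∧ P0 + P1 + Pfill = 1 := by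
  have hx : (2 : ℝ) * π / K = 2 * (π / K) := by ring
  set x := π / K with hxdef
  have hcos2 : Real.cos (2 * π / K) = 2 * Real.cos x ^ 2 - 1 := by
    rw [hx, Real.cos_two_mul]
  have hsin2 : Real.cos (2 * π / K) = 1 - 2 * Real.sin x ^ 2 := by
    rw [hx, Real.cos_two_mul']
    have := Real.sin_sq_add_cos_sq x
    linarith
  have hlampos : 0 < lam := by
    rw [hlam]; have := abs_nonneg (Real.cos (2 * π / K)); linarith
  have hs : 2 * Real.sin x ^ 2 ≤ lam := by
    rw [hlam]
    have := neg_abs_le (Real.cos (2 * π / K))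
    linarith [hsin2]
  have hc : 2 * Real.cos x ^ 2 ≤ lam := by
    rw [hlam]
    have := le_abs_self (Real.cos (2 * π / K))
    linarith [hcos2]
  refine ⟨?_, ?_, ?_, ?_⟩
  · rw [posSemidef_iff_dotProduct_mulVec]
    constructor
    · ext i j
      subst hPf hψ0p hψ1p
      fin_cases i <;> fin_cases j <;>
        simp [Matrix.IsHermitian, vecMulVec_apply, Matrix.one_apply, mul_comm]
    · intro y
      subst hPf hψ0p hψ1p
      have key : star y ⬝ᵥ (1 - (1 / lam) • (vecMulVec ![-Real.sin x, Real.cos x] ![-Real.sin x, Real.cos x] + vecMulVec ![Real.sin x, Real.cos x] ![Real.sin x, Real.cos x])) *ᵥ y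
          = (1 - (1 / lam) * (2 * Real.sin x ^ 2)) * y 0 ^ 2
            + (1 - (1 / lam) * (2 * Real.cos x ^ 2)) * y 1 ^ 2 := by
        simp [Matrix.mulVec, dotProduct, Fin.sum_univ_two, vecMulVec_apply,
          Matrix.sub_apply, Matrix.one_apply, Matrix.smul_apply, Matrix.add_apply]
        ring
      rw [key]
      have h1 : (1 / lam) * (2 * Real.sin x ^ 2) ≤ 1 := by
        rw [div_mul_eq_mul_div, one_mul, div_le_one hlampos]; exact hs
      have h2 : (1 / lam) * (2 * Real.cos x ^ 2) ≤ 1 := by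
        rw [div_mul_eq_mul_div, one_mul, div_le_one hlampos]; exact hc
      nlinarith [sq_nonneg (y 0), sq_nonneg (y 1)]
  · rw [hP0]; exact rankone_psd _ _ (by positivity)
  · rw [hP1]; exact rankone_psd _ _ (by positivity)
  · rw [hP0, hP1, hPf, smul_add]; abel
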